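/- Let A be a semiprime ring which does not contain an infinite direct sum of nonzero two-sided ideals, let M be an automorphism-invariant non-singular right A-module, and let M = X ⊕ Y be a decomposition with X quasi-injective non-singular and Y automorphism-invariant non-singular square-free (guaranteed to exist). Then either Y = 0 or Y contains a nonzero quasi-injective uniform submodule. -/

import Mathlib

open MulOpposite

namespace TugPaper

universe u v

/-- A submodule `N` of `M` is essential if it intersects every nonzero submodule nontrivially. -/
def IsEssentialSubmodule {R : Type*} {M : Type*} [Ring R] [AddCommGroup M] [Module R M]
    (N : Submodule R M) : Prop :=
  ∀ Z : Submodule R M, Z ≠ ⊥ → N ⊓ Z ≠ ⊥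

/-- The right annihilator `r(x) = {a : A | x·a = 0}` of an element `x` of a right `A`-module,
as a right ideal of `A` (i.e. a submodule of `A` viewed as a right module over itself). -/
def rAnn (A : Type*) [Ring A] {M : Type*} [AddCommGroup M] [Module Aᵐᵒᵖ M] (x : M) :
    Submodule Aᵐᵒᵖ A where
  carrier := {a : A | op a • x = 0}
  zero_mem' := by simp
  add_mem' := by
    intro a b ha hb
    simp only [Set.mem_setOf_eq] at *
    rw [op_add, add_smul, ha, hb, add_zero]
  smul_mem' := by
    intro c a ha
    simp only [Set.mem_setOf_eq] at *
    have : (c • a : A) = a * c.unop := rfl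
    rw [this]
    have h2 : op (a * c.unop) = op c.unop * op a := by simp
    rw [h2, mul_smul, ha, smul_zero]

/-- A right `A`-module `M` is non-singular if its singular submodule is zero, i.e. the only
element whose right annihilator is an essential right ideal is `0`. -/
def IsNonsingular (A : Type*) [Ring A] (M : Type*) [AddCommGroup M] [Module Aᵐᵒᵖ M] : Prop :=
  ∀ x : M, IsEssentialSubmodule (rAnn A x) → x = 0

/-- The Goldie radical of a right `A`-module `M`: the intersection of all submodules `Y`
such that `M/Y` is non-singular. -/
def goldieRadical (A : Type*) [Ring A] (M : Type*) [AddCommGroup M] [Module Aᵐᵒᵖ M] :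
    Submodule Aᵐᵒᵖ M :=
  sInf {Y : Submodule Aᵐᵒᵖ M | IsNonsingular A (M ⧸ Y)}

/-- A right `A`-module `M` is automorphism-invariant: for every injective module `Q`
containing (a copy of) `M` as an essential submodule, every automorphism of `Q` maps `M`
into `M`. -/
def AutomorphismInvariant (A : Type u) [Ring A] (M : Type v) [AddCommGroup M]
    [Module Aᵐᵒᵖ M] : Prop :=
  ∀ (Q : Type v) [AddCommGroup Q] [Module Aᵐᵒᵖ Q], Module.Injective Aᵐᵒᵖ Q →
    ∀ i : M →ₗ[Aᵐᵒᵖ] Q, Function.Injective i →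
      IsEssentialSubmodule (LinearMap.range i) →
        ∀ g : Q ≃ₗ[Aᵐᵒᵖ] Q, ∀ m : M, ∃ m' : M, g (i m) = i m'

/-- A module `M` is quasi-injective if every homomorphism from a submodule of `M` into `M`
extends to an endomorphism of `M`. -/
def QuasiInjective (A : Type*) [Ring A] (M : Type*) [AddCommGroup M] [Module Aᵐᵒᵖ M] : Prop :=
  ∀ (N : Submodule Aᵐᵒᵖ M) (f : N →ₗ[Aᵐᵒᵖ] M), ∃ g : M →ₗ[Aᵐᵒᵖ] M, ∀ n : N, g n = f n

/-- A right ideal of `A` is two-sided if it is also closed under left multiplication. -/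
def IsTwoSided (A : Type*) [Ring A] (I : Submodule Aᵐᵒᵖ A) : Prop :=
  ∀ a : A, ∀ x ∈ I, a * x ∈ I

/-- A ring `A` is right strongly semiprime if every two-sided ideal of `A` which is essential
as a right ideal contains a finite subset with zero right annihilator. -/
def RightStronglySemiprime (A : Type*) [Ring A] : Prop :=
  ∀ I : Submodule Aᵐᵒᵖ A, IsTwoSided A I → IsEssentialSubmodule I →
    ∃ S : Finset A, (S : Set A) ⊆ (I : Set A) ∧ ∀ a : A, (∀ s ∈ S, s * a = 0) → a = 0

/-- A ring is semiprime if it has no nonzero two-sided ideal with zero square. -/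
def SemiprimeRing (A : Type*) [Ring A] : Prop :=
  ∀ I : Submodule Aᵐᵒᵖ A, IsTwoSided A I → (∀ x ∈ I, ∀ y ∈ I, x * y = 0) → I = ⊥

/-- The ring `A` does not contain an infinite direct sum of nonzero two-sided ideals. -/
def NoInfiniteIdealDirectSum (A : Type*) [Ring A] : Prop :=
  ¬ ∃ I : ℕ → Submodule Aᵐᵒᵖ A,
      (∀ n, IsTwoSided A (I n)) ∧ (∀ n, I n ≠ ⊥) ∧
        ∀ n, I n ⊓ (⨆ m ∈ {m : ℕ | m ≠ n}, I m) = ⊥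

/-- A module is square-free if it does not contain a direct sum of two nonzero isomorphic
submodules. -/
def SquareFreeModule (A : Type*) [Ring A] (M : Type*) [AddCommGroup M] [Module Aᵐᵒᵖ M] : Prop :=
  ¬ ∃ D₁ D₂ : Submodule Aᵐᵒᵖ M,
      D₁ ≠ ⊥ ∧ D₂ ≠ ⊥ ∧ D₁ ⊓ D₂ = ⊥ ∧ Nonempty (D₁ ≃ₗ[Aᵐᵒᵖ] D₂)

/-- A module is uniform if any two nonzero submodules have nonzero intersection. -/
def UniformModule (A : Type*) [Ring A] (M : Type*) [AddCommGroup M] [Module Aᵐᵒᵖ M] : Prop :=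
  ∀ N₁ N₂ : Submodule Aᵐᵒᵖ M, N₁ ≠ ⊥ → N₂ ≠ ⊥ → N₁ ⊓ N₂ ≠ ⊥

/-- `N` is an essential submodule of `P` (both submodules of an ambient module). -/
def EssentialIn {R : Type*} {M : Type*} [Ring R] [AddCommGroup M] [Module R M]
    (N P : Submodule R M) : Prop :=
  N ≤ P ∧ ∀ Z : Submodule R M, Z ≤ P → Z ≠ ⊥ → N ⊓ Z ≠ ⊥

/-- A submodule is closed if it has no proper essential extension inside the ambient module. -/
def ClosedSubmodule {R : Type*} {M : Type*} [Ring R] [AddCommGroup M] [Module R M]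
    (N : Submodule R M) : Prop :=
  ∀ P : Submodule R M, EssentialIn N P → N = P

/-- A module is CS if every closed submodule is a direct summand. -/
def CSModule (A : Type*) [Ring A] (M : Type*) [AddCommGroup M] [Module Aᵐᵒᵖ M] : Prop :=
  ∀ N : Submodule Aᵐᵒᵖ M, ClosedSubmodule N → ∃ P : Submodule Aᵐᵒᵖ M, IsCompl N P

/-- `X` is injective relative to `Y` (`Y`-injective): every homomorphism from a submodule of `Y`
into `X` extends to a homomorphism `Y → X`. -/
def RelativelyInjective (R : Type*) [Ring R] (Y X : Type*) [AddCommGroup Y] [Module R Y]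
    [AddCommGroup X] [Module R X] : Prop :=
  ∀ (N : Submodule R Y) (f : N →ₗ[R] X), ∃ g : Y →ₗ[R] X, ∀ n : N, g n = f n


/-! ### Auxiliary lemmas -/

section AuxBasic

theorem ne_bot_of_le' {R M : Type*} [Ring R] [AddCommGroup M] [Module R M]
    {p q : Submodule R M} (hpq : p ≤ q) (hp : p ≠ ⊥) : q ≠ ⊥ :=
  fun h => hp (le_bot_iff.mp (h ▸ hpq))

theorem essentialIn_trans' {R M : Type*} [Ring R] [AddCommGroup M] [Module R M]
    {V H P : Submodule R M} (h1 : EssentialIn V H) (h2 : EssentialIn H P) : EssentialIn V P := by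
  refine ⟨h1.1.trans h2.1, fun Z hZP hZ => ?_⟩
  have h4 : V ⊓ (H ⊓ Z) ≠ ⊥ := h1.2 (H ⊓ Z) inf_le_left (h2.2 Z hZP hZ)
  exact ne_bot_of_le' (inf_le_inf_left V inf_le_right) h4

/-- A retract of an injective module is injective. -/
theorem injective_of_retract {R : Type*} [Ring R] {M M' : Type v} [AddCommGroup M] [Module R M]
    [AddCommGroup M'] [Module R M'] (ι : M →ₗ[R] M') (p : M' →ₗ[R] M)
    (hp : ∀ x, p (ι x) = x) (hM' : Module.Injective R M') : Module.Injective R M where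
  out X Y _ _ _ _ f hf g := by
    obtain ⟨h, hh⟩ := hM'.out f hf (ι.comp g)
    refine ⟨p.comp h, fun x => ?_⟩
    have := hh x
    simp only [LinearMap.coe_comp, Function.comp_apply] at this ⊢
    rw [this, hp]

theorem injective_of_equiv {R : Type*} [Ring R] {M M' : Type v} [AddCommGroup M] [Module R M]
    [AddCommGroup M'] [Module R M'] (e : M' ≃ₗ[R] M) (hM' : Module.Injective R M') :
    Module.Injective R M :=
  injective_of_retract e.symm.toLinearMap e.toLinearMap (fun x => e.apply_symm_apply x) hM'

/-- Every module embeds into an injective module of the same universe. -/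
theorem exists_embedding_injective (R : Type u) [Ring R] (N : Type u) [AddCommGroup N]
    [Module R N] :
    ∃ (Q : Type u) (_ : AddCommGroup Q) (_ : Module R Q), Module.Injective R Q ∧
      ∃ j : N →ₗ[R] Q, Function.Injective j := by
  let NN := ModuleCat.of R N
  let Q := CategoryTheory.Injective.under NN
  have h1 : CategoryTheory.Injective (ModuleCat.of R ↥Q) :=
    CategoryTheory.Injective.injective_under NN
  refine ⟨↥Q, inferInstance, inferInstance, Module.injective_module_of_injective_object _ _,
    (CategoryTheory.Injective.ι NN).hom, ?_⟩
  exact (ModuleCat.mono_iff_injective (CategoryTheory.Injective.ι NN)).mp inferInstance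

/-- Inside an injective module, every submodule `V` has a maximal essential extension `H`,
which is the image of an idempotent endomorphism fixing `H` pointwise. -/
theorem exists_closure_retract {R : Type*} {Q : Type*} [Ring R] [AddCommGroup Q] [Module R Q]
    (hQ : Module.Injective R Q) (V : Submodule R Q) :
    ∃ (H : Submodule R Q) (f : Q →ₗ[R] Q), EssentialIn V H ∧ LinearMap.range f = H ∧
      ∀ h ∈ H, f h = h := by
  classical
  -- Step 1 : maximal essential extension H of V.
  obtain ⟨H, -, hHmem, hHmax⟩ :
      ∃ H, V ≤ H ∧ EssentialIn V H ∧ ∀ P, EssentialIn V P → H ≤ P → P = H := by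
    have hih : ∀ c ⊆ {P : Submodule R Q | EssentialIn V P}, IsChain (· ≤ ·) c →
        ∀ y ∈ c, ∃ ub ∈ {P : Submodule R Q | EssentialIn V P}, ∀ z ∈ c, z ≤ ub := by
      intro c hcs hchain y hy
      refine ⟨sSup c, ⟨le_trans (hcs hy).1 (le_sSup hy), ?_⟩, fun z hz => le_sSup hz⟩
      intro Z hZle hZ
      obtain ⟨z, hzZ, hz0⟩ := (Submodule.ne_bot_iff _).mp hZ
      obtain ⟨P, hPc, hzP⟩ :=
        (Submodule.mem_sSup_of_directed ⟨y, hy⟩ hchain.directedOn).mp (hZle hzZ)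
      have hspan : Submodule.span R {z} ≤ P := by
        rw [Submodule.span_le, Set.singleton_subset_iff]; exact hzP
      have hs : V ⊓ Submodule.span R {z} ≠ ⊥ := (hcs hPc).2 _ hspan
        (by rwa [Ne, Submodule.span_singleton_eq_bot])
      refine ne_bot_of_le' (inf_le_inf_left V ?_) hs
      rw [Submodule.span_le, Set.singleton_subset_iff]; exact hzZ
    obtain ⟨H, hVH, hmax⟩ := zorn_le_nonempty₀ _ hih V
      ⟨le_rfl, fun Z hZV hZ => by rwa [inf_eq_right.mpr hZV]⟩
    exact ⟨H, hVH, hmax.1, fun P hP hHP => le_antisymm (hmax.2 hP hHP) hHP⟩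
  -- Step 2 : maximal complement K of H.
  obtain ⟨K, hHK, hKmax⟩ :
      ∃ K : Submodule R Q, H ⊓ K = ⊥ ∧ ∀ K', H ⊓ K' = ⊥ → K ≤ K' → K' ≤ K := by
    have hih : ∀ c ⊆ {K : Submodule R Q | H ⊓ K = ⊥}, IsChain (· ≤ ·) c →
        ∀ y ∈ c, ∃ ub ∈ {K : Submodule R Q | H ⊓ K = ⊥}, ∀ z ∈ c, z ≤ ub := by
      intro c hcs hchain y hy
      refine ⟨sSup c, ?_, fun z hz => le_sSup hz⟩
      rw [Set.mem_setOf_eq, eq_bot_iff]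
      rintro x ⟨hxH, hxS⟩
      obtain ⟨P, hPc, hxP⟩ :=
        (Submodule.mem_sSup_of_directed ⟨y, hy⟩ hchain.directedOn).mp hxS
      have hx : x ∈ H ⊓ P := ⟨hxH, hxP⟩
      rwa [hcs hPc] at hx
    obtain ⟨K, -, hmax⟩ := zorn_le_nonempty₀ _ hih ⊥ (by simp)
    exact ⟨K, hmax.1, fun K' h1 h2 => hmax.2 h1 h2⟩
  -- Step 3 : the projection H ⊕ K → H, extended to all of Q.
  set φ : (↥H × ↥K) →ₗ[R] Q := H.subtype.coprod K.subtype with hφdef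
  have hφ : Function.Injective φ := by
    rw [← LinearMap.ker_eq_bot, eq_bot_iff]
    rintro ⟨h, k⟩ hk
    have h0 : (h : Q) + (k : Q) = 0 := hk
    have h1 : (h : Q) = -(k : Q) := eq_neg_of_add_eq_zero_left h0
    have hmem : (h : Q) ∈ H ⊓ K := ⟨h.2, h1 ▸ K.neg_mem k.2⟩
    rw [hHK, Submodule.mem_bot] at hmem
    have hh : h = 0 := Subtype.ext hmem
    have hk0 : (k : Q) = 0 := by rw [hh] at h0; simpa using h0
    rw [Submodule.mem_bot]
    exact Prod.ext hh (Subtype.ext hk0)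
  set e := LinearEquiv.ofInjective φ hφ with hedef
  set σ : ↥(LinearMap.range φ) →ₗ[R] Q :=
    H.subtype.comp ((LinearMap.fst R ↥H ↥K).comp e.symm.toLinearMap) with hσdef
  have hHD : ∀ h ∈ H, h ∈ LinearMap.range φ := fun h hh => ⟨(⟨h, hh⟩, 0), by simp [hφdef]⟩
  have hKD : ∀ k ∈ K, k ∈ LinearMap.range φ := fun k hk => ⟨(0, ⟨k, hk⟩), by simp [hφdef]⟩
  have hσH : ∀ (h : Q) (hh : h ∈ H), σ ⟨h, hHD h hh⟩ = h := by
    intro h hh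
    have he : e (⟨h, hh⟩, 0) = ⟨h, hHD h hh⟩ := by
      apply Subtype.ext
      rw [LinearEquiv.ofInjective_apply]
      simp [hφdef]
    have h2 := congrArg e.symm he
    rw [LinearEquiv.symm_apply_apply] at h2
    simp [hσdef, ← h2]
  have hσK : ∀ (k : Q) (hk : k ∈ K), σ ⟨k, hKD k hk⟩ = 0 := by
    intro k hk
    have he : e (0, ⟨k, hk⟩) = ⟨k, hKD k hk⟩ := by
      apply Subtype.ext
      rw [LinearEquiv.ofInjective_apply]
      simp [hφdef]
    have h2 := congrArg e.symm he
    rw [LinearEquiv.symm_apply_apply] at h2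
    simp [hσdef, ← h2]
  obtain ⟨f, hf⟩ := hQ.out (LinearMap.range φ).subtype (Submodule.injective_subtype _) σ
  have hfH : ∀ h ∈ H, f h = h := fun h hh => by
    have h2 := hf ⟨h, hHD h hh⟩; rwa [hσH h hh] at h2
  have hfK : ∀ k ∈ K, f k = 0 := fun k hk => by
    have h2 := hf ⟨k, hKD k hk⟩; rwa [hσK k hk] at h2
  have hHle : H ≤ LinearMap.range f := fun h hh => ⟨h, hfH h hh⟩
  have hEss : ∀ Z : Submodule R Q, Z ≤ LinearMap.range f → Z ≠ ⊥ → H ⊓ Z ≠ ⊥ := by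
    intro Z hZle hZ
    obtain ⟨z, hzZ, hz0⟩ := (Submodule.ne_bot_iff _).mp hZ
    obtain ⟨x, hfx⟩ := hZle hzZ
    have hxK : x ∉ K := fun hxK => hz0 (by rw [← hfx, hfK x hxK])
    have hne : H ⊓ (K ⊔ Submodule.span R {x}) ≠ ⊥ := by
      intro hb
      have hxm : x ∈ K ⊔ Submodule.span R {x} :=
        (le_sup_right : Submodule.span R {x} ≤ _) (Submodule.mem_span_singleton_self x)
      exact hxK (hKmax _ hb le_sup_left hxm)
    obtain ⟨h, ⟨hhH, hhmem⟩, hh0⟩ := (Submodule.ne_bot_iff _).mp hne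
    obtain ⟨k, hkK, w, hw, hkw⟩ := Submodule.mem_sup.mp hhmem
    obtain ⟨a, ha⟩ := Submodule.mem_span_singleton.mp hw
    have h1 : h = a • z := by
      have h2 : f (k + w) = a • z := by
        rw [map_add, hfK k hkK, ← ha, map_smul, hfx, zero_add]
      rw [hkw] at h2
      exact (hfH h hhH).symm.trans h2
    refine (Submodule.ne_bot_iff _).mpr ⟨h, ⟨hhH, ?_⟩, hh0⟩
    rw [h1]; exact Z.smul_mem a hzZ
  have hrange : LinearMap.range f = H :=
    hHmax _ (essentialIn_trans' hHmem ⟨hHle, hEss⟩) hHle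
  exact ⟨H, f, hHmem, hrange, hfH⟩

end AuxBasic
section AuxTransfer

variable {A : Type*} [Ring A]

theorem uniformModule_of_injective {R : Type*} [Ring R] {M M' : Type*} [AddCommGroup M]
    [Module R M] [AddCommGroup M'] [Module R M'] (j : M →ₗ[R] M')
    (hj : Function.Injective j)
    (h : ∀ N₁ N₂ : Submodule R M', N₁ ≠ ⊥ → N₂ ≠ ⊥ → N₁ ⊓ N₂ ≠ ⊥) :
    ∀ N₁ N₂ : Submodule R M, N₁ ≠ ⊥ → N₂ ≠ ⊥ → N₁ ⊓ N₂ ≠ ⊥ := by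
  intro N₁ N₂ h₁ h₂
  have hm : ∀ N : Submodule R M, N ≠ ⊥ → Submodule.map j N ≠ ⊥ := by
    intro N hN
    obtain ⟨x, hx, hx0⟩ := (Submodule.ne_bot_iff _).mp hN
    exact (Submodule.ne_bot_iff _).mpr ⟨j x, Submodule.mem_map_of_mem hx,
      fun h0 => hx0 (hj (by rw [h0, map_zero]))⟩
  have h3 := h _ _ (hm N₁ h₁) (hm N₂ h₂)
  rw [← Submodule.map_inf _ hj] at h3
  intro hb
  rw [hb, Submodule.map_bot] at h3
  exact h3 rfl

theorem quasiInjective_congr {R : Type*} [Ring R] {M M' : Type*} [AddCommGroup M]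
    [Module R M] [AddCommGroup M'] [Module R M'] (e : M ≃ₗ[R] M')
    (h : ∀ (N : Submodule R M) (f : N →ₗ[R] M), ∃ g : M →ₗ[R] M, ∀ n : N, g n = f n) :
    ∀ (N' : Submodule R M') (f' : N' →ₗ[R] M'), ∃ g' : M' →ₗ[R] M', ∀ n : N', g' n = f' n := by
  intro N' f'
  set N : Submodule R M := Submodule.map ((e.symm : M' ≃ₗ[R] M) : M' →ₗ[R] M) N' with hN
  set eN : ↥N' ≃ₗ[R] ↥N := e.symm.submoduleMap N' with heN
  obtain ⟨g, hg⟩ := h N ((e.symm : M' →ₗ[R] M).comp (f'.comp (eN.symm : ↥N →ₗ[R] ↥N')))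
  refine ⟨(e : M →ₗ[R] M').comp (g.comp (e.symm : M' →ₗ[R] M)), fun n' => ?_⟩
  have h2 := hg (eN n')
  simp only [LinearMap.coe_comp, Function.comp_apply, LinearEquiv.coe_coe,
    LinearEquiv.symm_apply_apply] at h2 ⊢
  have h1 : ((eN n' : ↥N) : M) = e.symm (n' : M') := e.symm.submoduleMap_apply N' n'
  rw [← h1, h2, LinearEquiv.apply_symm_apply]

/-- Scalar multiplication into a fixed element, `a ↦ x·a`, as a linear map. -/
def smulMap (A : Type*) [Ring A] {M : Type*} [AddCommGroup M] [Module Aᵐᵒᵖ M] (x : M) :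
    A →ₗ[Aᵐᵒᵖ] M where
  toFun a := op a • x
  map_add' a b := by show op (a + b) • x = op a • x + op b • x; rw [op_add, add_smul]
  map_smul' c a := by
    simp only [RingHom.id_apply]
    show op (a * c.unop) • x = c • (op a • x)
    rw [smul_smul]
    congr 1

@[simp] theorem smulMap_apply {M : Type*} [AddCommGroup M] [Module Aᵐᵒᵖ M] (x : M) (a : A) :
    smulMap A x a = op a • x := rfl

/-- Left multiplication `a ↦ c * a` is linear for the right module structure. -/
def lmulMap (A : Type*) [Ring A] (c : A) : A →ₗ[Aᵐᵒᵖ] A where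
  toFun a := c * a
  map_add' := mul_add c
  map_smul' r a := by
    show c * (a * r.unop) = (c * a) * r.unop
    rw [mul_assoc]

@[simp] theorem lmulMap_apply (c a : A) : lmulMap A c a = c * a := rfl

theorem op_smul_eq_mul' (a x : A) : (op a • x : A) = x * a := rfl

end AuxTransfer
section PartB

/-- Over a semiprime ring with no infinite direct sum of two-sided ideals, every nonzero
non-singular square-free module has a nonzero "relatively uniform" submodule. -/
theorem exists_rel_uniform (A : Type u) [Ring A] (hsp : SemiprimeRing A)
    (hni : NoInfiniteIdealDirectSum A) (N : Type v) [AddCommGroup N] [Module Aᵐᵒᵖ N]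
    (hns : IsNonsingular A N) (hsf : SquareFreeModule A N)
    (hN : (⊤ : Submodule Aᵐᵒᵖ N) ≠ ⊥) :
    ∃ V : Submodule Aᵐᵒᵖ N, V ≠ ⊥ ∧ ∀ P₁ P₂ : Submodule Aᵐᵒᵖ N,
      P₁ ≤ V → P₂ ≤ V → P₁ ≠ ⊥ → P₂ ≠ ⊥ → P₁ ⊓ P₂ ≠ ⊥ := by
  classical
  by_contra hcon
  push_neg at hcon
  -- every nonzero submodule contains two nonzero disjoint submodules
  choose P₁ P₂ hP₁le hP₂le hP₁ne hP₂ne hPdisj using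
    fun (V : {V : Submodule Aᵐᵒᵖ N // V ≠ ⊥}) => hcon V.1 V.2
  set g : {V : Submodule Aᵐᵒᵖ N // V ≠ ⊥} → {V : Submodule Aᵐᵒᵖ N // V ≠ ⊥} :=
    fun V => ⟨P₂ V, hP₂ne V⟩ with hg
  set W : ℕ → {V : Submodule Aᵐᵒᵖ N // V ≠ ⊥} := fun n => g^[n] ⟨⊤, hN⟩ with hW
  have hWsucc : ∀ n, W (n + 1) = g (W n) := fun n => Function.iterate_succ_apply' g n _
  set Vs : ℕ → Submodule Aᵐᵒᵖ N := fun n => P₁ (W n) with hVs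
  have hVsne : ∀ n, Vs n ≠ ⊥ := fun n => hP₁ne _
  have hWmono : ∀ n, (W (n + 1)).1 ≤ (W n).1 := fun n => by
    rw [hWsucc]; exact hP₂le (W n)
  have hWle : ∀ n m, n ≤ m → (W m).1 ≤ (W n).1 := by
    intro n m hnm
    induction m, hnm using Nat.le_induction with
    | base => exact le_rfl
    | succ m hm ih => exact (hWmono m).trans ih
  have hVsle : ∀ n, Vs n ≤ (W n).1 := fun n => hP₁le _
  have hVdisj : ∀ n, Vs n ⊓ (W (n + 1)).1 = ⊥ := fun n => by
    rw [hWsucc]; exact hPdisj (W n)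
  have hpair : ∀ n m, n ≠ m → Vs n ⊓ Vs m = ⊥ := by
    have key : ∀ n m, n < m → Vs n ⊓ Vs m = ⊥ := by
      intro n m hnm
      have h1 : Vs m ≤ (W (n + 1)).1 := (hVsle m).trans (hWle (n + 1) m hnm)
      exact le_bot_iff.mp ((inf_le_inf_left (Vs n) h1).trans (hVdisj n).le)
    intro n m hnm
    rcases lt_or_gt_of_ne hnm with h | h
    · exact key n m h
    · rw [inf_comm]; exact key m n h
  -- pick a nonzero element in each Vs n, and a complement of its annihilator
  have hx : ∀ n, ∃ x : N, x ∈ Vs n ∧ x ≠ 0 := fun n => (Submodule.ne_bot_iff _).mp (hVsne n)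
  choose x hxmem hxne using hx
  have hKex : ∀ n, ∃ K : Submodule Aᵐᵒᵖ A, K ≠ ⊥ ∧ rAnn A (x n) ⊓ K = ⊥ := by
    intro n
    by_contra h
    push_neg at h
    exact hxne n (hns (x n) fun Z hZ => h Z hZ)
  choose K hKne hKdisj using hKex
  -- the key orthogonality relation
  have key : ∀ n m, n ≠ m → ∀ t ∈ K n, ∀ c ∈ K m, t * c = 0 := by
    intro n m hnm t ht c hc
    set ℓ : A →ₗ[Aᵐᵒᵖ] N := (smulMap A (x n)).comp (lmulMap A t) with hℓ
    have hℓapp : ∀ a, ℓ a = op (t * a) • x n := fun a => rfl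
    set L : Submodule Aᵐᵒᵖ A := LinearMap.ker ℓ ⊓ K m with hLdef
    by_cases hLe : ∀ Z : Submodule Aᵐᵒᵖ A, Z ≤ K m → Z ≠ ⊥ → L ⊓ Z ≠ ⊥
    · -- essential case : use non-singularity
      have hw : ℓ c = 0 := by
        apply hns
        intro Z hZ
        by_cases hcZ : Submodule.map (lmulMap A c) Z = ⊥
        · have hsub : Z ≤ rAnn A (ℓ c) := by
            intro a ha
            have h0 : c * a = 0 := by
              have hm0 : lmulMap A c a ∈ Submodule.map (lmulMap A c) Z :=
                Submodule.mem_map_of_mem ha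
              rw [hcZ, Submodule.mem_bot] at hm0
              exact hm0
            show op a • ℓ c = 0
            rw [hℓapp, smul_smul, ← op_mul, mul_assoc, h0, mul_zero, op_zero, zero_smul]
          rw [inf_eq_right.mpr hsub]
          exact hZ
        · have hcZle : Submodule.map (lmulMap A c) Z ≤ K m := by
            rintro y ⟨a, _, rfl⟩
            show c * a ∈ K m
            have hca : c * a = op a • c := rfl
            rw [hca]
            exact (K m).smul_mem _ hc
          obtain ⟨u, ⟨huL, humem⟩, hu0⟩ := (Submodule.ne_bot_iff _).mp (hLe _ hcZle hcZ)
          obtain ⟨z, hzZ, hzu⟩ := humem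
          refine (Submodule.ne_bot_iff _).mpr ⟨z, ⟨?_, hzZ⟩, ?_⟩
          · show op z • ℓ c = 0
            have h1 : op z • ℓ c = ℓ (c * z) := by
              rw [hℓapp, hℓapp, smul_smul, ← op_mul, mul_assoc]
            rw [h1]
            have h2 : (c * z : A) = u := hzu
            rw [h2]
            exact huL.1
          · rintro rfl
            apply hu0
            rw [← hzu]
            show lmulMap A c 0 = 0
            rw [map_zero]
      -- conclude t * c = 0
      have htc : t * c ∈ rAnn A (x n) ⊓ K n := by
        constructor
        · show op (t * c) • x n = 0
          rw [← hℓapp]; exact hw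
        · show op c • t ∈ K n
          exact (K n).smul_mem _ ht
      rw [hKdisj n, Submodule.mem_bot] at htc
      exact htc
    · -- non-essential case : contradict square-freeness
      push_neg at hLe
      obtain ⟨C, hCle, hCne, hCL⟩ := hLe
      exfalso
      apply hsf
      set F₁ : ↥C →ₗ[Aᵐᵒᵖ] N := ℓ.domRestrict C with hF₁
      set F₂ : ↥C →ₗ[Aᵐᵒᵖ] N := (smulMap A (x m)).domRestrict C with hF₂
      have hinj1 : Function.Injective F₁ := by
        rw [← LinearMap.ker_eq_bot, eq_bot_iff]
        rintro ⟨a, haC⟩ hk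
        have ha0 : ℓ a = 0 := hk
        have hmem : a ∈ L ⊓ C := ⟨⟨ha0, hCle haC⟩, haC⟩
        rw [hCL, Submodule.mem_bot] at hmem
        rw [Submodule.mem_bot]
        exact Subtype.ext hmem
      have hinj2 : Function.Injective F₂ := by
        rw [← LinearMap.ker_eq_bot, eq_bot_iff]
        rintro ⟨a, haC⟩ hk
        have ha0 : op a • x m = 0 := hk
        have hmem : a ∈ rAnn A (x m) ⊓ K m := ⟨ha0, hCle haC⟩
        rw [hKdisj m, Submodule.mem_bot] at hmem
        rw [Submodule.mem_bot]
        exact Subtype.ext hmem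
      have hD₁le : LinearMap.range F₁ ≤ Vs n := by
        rintro y ⟨a, rfl⟩
        show op (t * (a : A)) • x n ∈ Vs n
        exact (Vs n).smul_mem _ (hxmem n)
      have hD₂le : LinearMap.range F₂ ≤ Vs m := by
        rintro y ⟨a, rfl⟩
        show op (a : A) • x m ∈ Vs m
        exact (Vs m).smul_mem _ (hxmem m)
      have hCne' : ∃ a : ↥C, a ≠ 0 := by
        obtain ⟨a, ha, ha0⟩ := (Submodule.ne_bot_iff _).mp hCne
        exact ⟨⟨a, ha⟩, fun h => ha0 (congrArg Subtype.val h)⟩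
      obtain ⟨a₀, ha₀⟩ := hCne'
      have hD₁ne : LinearMap.range F₁ ≠ ⊥ := by
        refine (Submodule.ne_bot_iff _).mpr ⟨F₁ a₀, LinearMap.mem_range_self _ _, fun h => ha₀ ?_⟩
        exact hinj1 (by rw [h, map_zero])
      have hD₂ne : LinearMap.range F₂ ≠ ⊥ := by
        refine (Submodule.ne_bot_iff _).mpr ⟨F₂ a₀, LinearMap.mem_range_self _ _, fun h => ha₀ ?_⟩
        exact hinj2 (by rw [h, map_zero])
      refine ⟨LinearMap.range F₁, LinearMap.range F₂, hD₁ne, hD₂ne, ?_, ?_⟩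
      · exact le_bot_iff.mp ((inf_le_inf hD₁le hD₂le).trans (hpair n m hnm).le)
      · exact ⟨(LinearEquiv.ofInjective F₁ hinj1).symm.trans (LinearEquiv.ofInjective F₂ hinj2)⟩
  -- build the two-sided ideals
  set S : ℕ → Set A := fun n => {y | ∃ a : A, ∃ k ∈ K n, y = a * k} with hS
  set B : ℕ → Submodule Aᵐᵒᵖ A := fun n => Submodule.span Aᵐᵒᵖ (S n) with hB
  have hKB : ∀ n, K n ≤ B n := fun n k hk =>
    Submodule.subset_span ⟨1, k, hk, (one_mul k).symm⟩
  have hBts : ∀ n, IsTwoSided A (B n) := by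
    intro n a y hy
    have hmle : Submodule.map (lmulMap A a) (B n) ≤ B n := by
      rw [hB]
      rw [Submodule.map_span]
      apply Submodule.span_le.mpr
      rintro w ⟨s, ⟨a', k, hk, rfl⟩, rfl⟩
      exact Submodule.subset_span ⟨a * a', k, hk, by
        show a * (a' * k) = a * a' * k
        rw [mul_assoc]⟩
    exact hmle (Submodule.mem_map_of_mem hy)
  have hBne : ∀ n, B n ≠ ⊥ := fun n => ne_bot_of_le' (hKB n) (hKne n)
  have hmul : ∀ n m, n ≠ m → ∀ u ∈ B n, ∀ y ∈ B m, u * y = 0 := by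
    intro n m hnm
    have hgen : ∀ s ∈ S n, ∀ y ∈ B m, s * y = 0 := by
      rintro s ⟨a, k, hk, rfl⟩ y hy
      have hky : k * y = 0 := by
        have hmap : Submodule.map (lmulMap A k) (B m) = ⊥ := by
          rw [hB, Submodule.map_span, Submodule.span_eq_bot]
          rintro w ⟨s', ⟨a₂, k', hk', rfl⟩, rfl⟩
          show k * (a₂ * k') = 0
          rw [← mul_assoc]
          refine key n m hnm (k * a₂) ?_ k' hk'
          show op a₂ • k ∈ K n
          exact (K n).smul_mem _ hk
        have h0 : lmulMap A k y ∈ Submodule.map (lmulMap A k) (B m) :=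
          Submodule.mem_map_of_mem hy
        rw [hmap, Submodule.mem_bot] at h0
        exact h0
      rw [mul_assoc, hky, mul_zero]
    intro u hu
    refine Submodule.span_induction (p := fun u _ => ∀ y ∈ B m, u * y = 0)
      hgen (by intro y _; rw [zero_mul]) ?_ ?_ hu
    · intro u v _ _ hu hv y hy
      rw [add_mul, hu y hy, hv y hy, add_zero]
    · intro r u _ hu y hy
      show (u * r.unop) * y = 0
      rw [mul_assoc]
      exact hu _ (hBts m r.unop y hy)
  have hsup : ∀ n, ∀ u ∈ B n, ∀ y ∈ (⨆ m ∈ {m : ℕ | m ≠ n}, B m), u * y = 0 := by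
    intro n u hu y hy
    have hle : (⨆ m ∈ {m : ℕ | m ≠ n}, B m) ≤ rAnn A u := by
      refine iSup₂_le fun m hm => ?_
      intro z hz
      show op z • u = 0
      show u * z = 0
      exact hmul n m (Ne.symm hm) u hu z hz
    exact hle hy
  have hSts : ∀ n, IsTwoSided A (⨆ m ∈ {m : ℕ | m ≠ n}, B m) := by
    intro n a y hy
    have hle : (⨆ m ∈ {m : ℕ | m ≠ n}, B m) ≤
        Submodule.comap (lmulMap A a) (⨆ m ∈ {m : ℕ | m ≠ n}, B m) := by
      refine iSup₂_le fun m hm => ?_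
      intro z hz
      refine Submodule.mem_comap.mpr ?_
      have h1 : (lmulMap A a) z ∈ B m := hBts m a z hz
      exact (le_biSup B hm) h1
    exact hle hy
  apply hni
  refine ⟨B, hBts, hBne, fun n => ?_⟩
  apply hsp
  · intro a z hz
    exact ⟨hBts n a z hz.1, hSts n a z hz.2⟩
  · intro u hu y hy
    exact hsup n u hu.1 y hy.2

end PartB
section PartA

set_option maxHeartbeats 2000000 in
set_option synthInstance.maxHeartbeats 1000000 in
/-- An automorphism-invariant module with a nonzero relatively uniform submodule contains a
nonzero quasi-injective uniform submodule. -/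
theorem exists_qi_uniform (R : Type u) [Ring R] (N : Type u) [AddCommGroup N] [Module R N]
    (hai : ∀ (Q : Type u) [AddCommGroup Q] [Module R Q], Module.Injective R Q →
      ∀ i : N →ₗ[R] Q, Function.Injective i →
        IsEssentialSubmodule (LinearMap.range i) →
          ∀ g : Q ≃ₗ[R] Q, ∀ m : N, ∃ m' : N, g (i m) = i m')
    (V : Submodule R N) (hV : V ≠ ⊥)
    (hVu : ∀ P₁ P₂ : Submodule R N, P₁ ≤ V → P₂ ≤ V → P₁ ≠ ⊥ → P₂ ≠ ⊥ → P₁ ⊓ P₂ ≠ ⊥) :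
    ∃ U : Submodule R N, U ≠ ⊥ ∧
      (∀ (N' : Submodule R ↥U) (f : N' →ₗ[R] ↥U), ∃ g : ↥U →ₗ[R] ↥U, ∀ n : N', g n = f n) ∧
      (∀ N₁ N₂ : Submodule R ↥U, N₁ ≠ ⊥ → N₂ ≠ ⊥ → N₁ ⊓ N₂ ≠ ⊥) := by
  classical
  obtain ⟨Q₀, _, _, hQ₀, j, hj⟩ := exists_embedding_injective R N
  -- close up the image of N inside Q₀
  obtain ⟨HY, fY, hessY, hrangeY, hfYid⟩ := exists_closure_retract hQ₀ (LinearMap.range j)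
  have hQHY : Module.Injective R ↥HY := by
    refine injective_of_retract HY.subtype
      (LinearMap.codRestrict HY fY (fun q => hrangeY ▸ LinearMap.mem_range_self fY q)) ?_ hQ₀
    intro h
    exact Subtype.ext (hfYid _ h.2)
  set i : N →ₗ[R] ↥HY :=
    LinearMap.codRestrict HY j (fun q => hessY.1 (LinearMap.mem_range_self j q)) with hidef
  have hicoe : ∀ q, ((i q : ↥HY) : Q₀) = j q := fun q => rfl
  have hiinj : Function.Injective i := fun q q' h => hj (congrArg Subtype.val h)
  have hiess : IsEssentialSubmodule (LinearMap.range i) := by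
    intro Z hZ
    obtain ⟨z, hzZ, hz0⟩ := (Submodule.ne_bot_iff _).mp hZ
    have hZ'ne : Submodule.map HY.subtype Z ≠ ⊥ := by
      refine (Submodule.ne_bot_iff _).mpr ⟨(z : Q₀), Submodule.mem_map_of_mem hzZ, ?_⟩
      intro h
      exact hz0 (Subtype.ext h)
    have h1 : LinearMap.range j ⊓ Submodule.map HY.subtype Z ≠ ⊥ :=
      hessY.2 _ (Submodule.map_subtype_le HY Z) hZ'ne
    obtain ⟨q, ⟨⟨w, hw⟩, hqZ⟩, hq0⟩ := (Submodule.ne_bot_iff _).mp h1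
    obtain ⟨z', hz'Z, hz'q⟩ := hqZ
    refine (Submodule.ne_bot_iff _).mpr ⟨z', ⟨⟨w, ?_⟩, hz'Z⟩, ?_⟩
    · refine Subtype.ext ?_
      rw [hicoe, hw]
      exact hz'q.symm
    · intro h
      apply hq0
      rw [← hz'q, h]
      rfl
  -- close up the image of V inside HY
  set V' : Submodule R ↥HY := Submodule.map i V with hV'def
  have hV'ne : V' ≠ ⊥ := by
    obtain ⟨v, hv, hv0⟩ := (Submodule.ne_bot_iff _).mp hV
    exact (Submodule.ne_bot_iff _).mpr ⟨i v, Submodule.mem_map_of_mem hv,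
      fun h => hv0 (hiinj (by rw [h, map_zero]))⟩
  obtain ⟨H, f, hessH, hrangeH, hfid⟩ := exists_closure_retract hQHY V'
  have hHne : H ≠ ⊥ := ne_bot_of_le' hessH.1 hV'ne
  set p : ↥HY →ₗ[R] ↥H :=
    LinearMap.codRestrict H f (fun q => hrangeH ▸ LinearMap.mem_range_self f q) with hpdef
  have hpcoe : ∀ q, ((p q : ↥H) : ↥HY) = f q := fun q => rfl
  have hpid : ∀ h : ↥H, p (h : ↥HY) = h := fun h => Subtype.ext (hfid _ h.2)
  have hQH : Module.Injective R ↥H := injective_of_retract H.subtype p hpid hQHY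
  -- uniformity of H
  have hrel : ∀ P₁ P₂ : Submodule R ↥HY, P₁ ≤ V' → P₂ ≤ V' → P₁ ≠ ⊥ → P₂ ≠ ⊥ →
      P₁ ⊓ P₂ ≠ ⊥ := by
    intro P₁ P₂ h₁le h₂le h₁ h₂
    have hPle : ∀ P : Submodule R ↥HY, P ≤ V' → Submodule.comap i P ≤ V := by
      intro P hP q hq
      obtain ⟨v, hv, hvq⟩ := hP hq
      rwa [← hiinj hvq]
    have hPne : ∀ P : Submodule R ↥HY, P ≤ V' → P ≠ ⊥ → Submodule.comap i P ≠ ⊥ := by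
      intro P hP hPn
      obtain ⟨q, hq, hq0⟩ := (Submodule.ne_bot_iff _).mp hPn
      obtain ⟨v, _, hvq⟩ := hP hq
      refine (Submodule.ne_bot_iff _).mpr ⟨v, ?_, ?_⟩
      · show i v ∈ P
        rwa [hvq]
      · intro h
        rw [h, map_zero] at hvq
        exact hq0 hvq.symm
    have h3 := hVu _ _ (hPle P₁ h₁le) (hPle P₂ h₂le) (hPne P₁ h₁le h₁) (hPne P₂ h₂le h₂)
    obtain ⟨v, hv, hv0⟩ := (Submodule.ne_bot_iff _).mp h3
    refine (Submodule.ne_bot_iff _).mpr ⟨i v, ⟨hv.1, hv.2⟩, ?_⟩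
    intro h
    exact hv0 (hiinj (by rw [h, map_zero]))
  have hHuni : ∀ N₁ N₂ : Submodule R ↥H, N₁ ≠ ⊥ → N₂ ≠ ⊥ → N₁ ⊓ N₂ ≠ ⊥ := by
    intro N₁ N₂ h₁ h₂
    have hmapne : ∀ Nn : Submodule R ↥H, Nn ≠ ⊥ → Submodule.map H.subtype Nn ≠ ⊥ := by
      intro Nn hn
      obtain ⟨q, hq, hq0⟩ := (Submodule.ne_bot_iff _).mp hn
      exact (Submodule.ne_bot_iff _).mpr ⟨(q : ↥HY), Submodule.mem_map_of_mem hq,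
        fun h => hq0 (Subtype.ext h)⟩
    set Z₁ := Submodule.map H.subtype N₁ with hZ₁
    set Z₂ := Submodule.map H.subtype N₂ with hZ₂
    have hP₁ := hessH.2 Z₁ (Submodule.map_subtype_le H N₁) (hmapne _ h₁)
    have hP₂ := hessH.2 Z₂ (Submodule.map_subtype_le H N₂) (hmapne _ h₂)
    have h4 := hrel (V' ⊓ Z₁) (V' ⊓ Z₂) inf_le_left inf_le_left hP₁ hP₂
    have h5 : (V' ⊓ Z₁) ⊓ (V' ⊓ Z₂) ≤ Z₁ ⊓ Z₂ := inf_le_inf inf_le_right inf_le_right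
    have h6 : Z₁ ⊓ Z₂ ≠ ⊥ := ne_bot_of_le' h5 h4
    rw [hZ₁, hZ₂, ← Submodule.map_inf _ (Submodule.injective_subtype H)] at h6
    intro hb
    rw [hb, Submodule.map_bot] at h6
    exact h6 rfl
  -- the invariant submodule U
  set UQ : Submodule R ↥HY := H ⊓ LinearMap.range i with hUQ
  set UH : Submodule R ↥H := Submodule.comap H.subtype UQ with hUH
  -- extension of automorphisms of H to HY
  set G : (↥H ≃ₗ[R] ↥H) → (↥HY →ₗ[R] ↥HY) := fun g =>
    H.subtype.comp (g.toLinearMap.comp p) + (LinearMap.id - H.subtype.comp p) with hG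
  have hGapp : ∀ g q, G g q = ((g (p q) : ↥H) : ↥HY) + q - ((p q : ↥H) : ↥HY) := by
    intro g q
    show ((g (p q) : ↥H) : ↥HY) + (q - ((p q : ↥H) : ↥HY)) = _
    rw [add_sub_assoc']
  have hpp : ∀ q, p ((p q : ↥H) : ↥HY) = p q := fun q => hpid (p q)
  have hpG : ∀ g q, p (G g q) = g (p q) := by
    intro g q
    rw [hGapp, map_sub, map_add, hpid (g (p q)), hpp]
    abel
  have hGG : ∀ (g g' : ↥H ≃ₗ[R] ↥H) (q : ↥HY),
      G g (G g' q) = ((g (g' (p q)) : ↥H) : ↥HY) + q - ((p q : ↥H) : ↥HY) := by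
    intro g g' q
    rw [hGapp, hpG, hGapp g' q]
    abel
  have hGinv : ∀ g : ↥H ≃ₗ[R] ↥H, (G g).comp (G g.symm) = LinearMap.id := by
    intro g
    apply LinearMap.ext
    intro q
    show G g (G g.symm q) = q
    rw [hGG, g.apply_symm_apply]
    abel
  set Ghat : (↥H ≃ₗ[R] ↥H) → (↥HY ≃ₗ[R] ↥HY) := fun g =>
    LinearEquiv.ofLinear (G g) (G g.symm) (hGinv g)
      (by have h1 := hGinv g.symm; rwa [g.symm_symm] at h1) with hGhat
  have hGhatapp : ∀ g q, Ghat g q = G g q := fun g q => rfl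
  -- invariance of UH under all automorphisms of H
  have hinv_aut : ∀ (g : ↥H ≃ₗ[R] ↥H) (u : ↥H), u ∈ UH → g u ∈ UH := by
    intro g u hu
    have hu1 : (u : ↥HY) ∈ UQ := hu
    obtain ⟨m, hm⟩ := hu1.2
    have h1 : G g (u : ↥HY) = ((g u : ↥H) : ↥HY) := by
      rw [hGapp, hpid u, add_sub_cancel_right]
    obtain ⟨m', hm'⟩ := hai ↥HY hQHY i hiinj hiess (Ghat g) m
    show ((g u : ↥H) : ↥HY) ∈ UQ
    refine ⟨(g u).2, ⟨m', ?_⟩⟩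
    rw [← hm']
    show Ghat g (i m) = ((g u : ↥H) : ↥HY)
    rw [hGhatapp, hm, h1]
  -- injective endomorphisms of H are bijective
  have hHne' : ∃ h : ↥H, h ≠ 0 := by
    obtain ⟨q, hq, hq0⟩ := (Submodule.ne_bot_iff _).mp hHne
    exact ⟨⟨q, hq⟩, fun h => hq0 (congrArg Subtype.val h)⟩
  have hsurj : ∀ F : ↥H →ₗ[R] ↥H, Function.Injective F → Function.Surjective F := by
    intro F hF
    have hrFne : LinearMap.range F ≠ ⊥ := by
      obtain ⟨h0, hh0⟩ := hHne'
      refine (Submodule.ne_bot_iff _).mpr ⟨F h0, LinearMap.mem_range_self _ _, ?_⟩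
      intro h
      exact hh0 (hF (by rw [h, map_zero]))
    have hrFinj : Module.Injective R ↥(LinearMap.range F) :=
      injective_of_equiv (LinearEquiv.ofInjective F hF) hQH
    obtain ⟨p', hp'⟩ := hrFinj.out (LinearMap.range F).subtype (Submodule.injective_subtype _)
      LinearMap.id
    have hall : ∀ h : ↥H, h ∈ LinearMap.range F := by
      intro h
      set d : ↥H := h - ((p' h : ↥(LinearMap.range F)) : ↥H) with hd
      have hpd : p' d = 0 := by
        have h2 : p' (((p' h) : ↥(LinearMap.range F)) : ↥H) = p' h := hp' (p' h)
        rw [hd, map_sub, h2, sub_self]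
      by_cases hd0 : d = 0
      · have h3 : h = ((p' h : ↥(LinearMap.range F)) : ↥H) := by
          rwa [hd, sub_eq_zero] at hd0
        rw [h3]
        exact (p' h).2
      · exfalso
        have hspan : Submodule.span R {d} ≠ ⊥ := by
          rwa [Ne, Submodule.span_singleton_eq_bot]
        have h4 := hHuni _ _ hrFne hspan
        obtain ⟨y, ⟨hyr, hys⟩, hy0⟩ := (Submodule.ne_bot_iff _).mp h4
        obtain ⟨a, ha⟩ := Submodule.mem_span_singleton.mp hys
        have h5 : p' y = 0 := by
          rw [← ha, map_smul, hpd, smul_zero]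
        have h6 : p' y = ⟨y, hyr⟩ := hp' ⟨y, hyr⟩
        rw [h5] at h6
        exact hy0 (congrArg Subtype.val h6.symm)
    intro h
    obtain ⟨w, hw⟩ := hall h
    exact ⟨w, hw⟩
  -- full invariance of UH
  have hinv : ∀ (F : ↥H →ₗ[R] ↥H) (u : ↥H), u ∈ UH → F u ∈ UH := by
    intro F u hu
    by_cases hF : Function.Injective F
    · exact hinv_aut (LinearEquiv.ofBijective F ⟨hF, hsurj F hF⟩) u hu
    · have hker : LinearMap.ker F ≠ ⊥ := by
        rwa [Ne, LinearMap.ker_eq_bot]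
      set F2 : ↥H →ₗ[R] ↥H := LinearMap.id - F with hF2
      have hinj2 : Function.Injective F2 := by
        rw [← LinearMap.ker_eq_bot]
        by_contra hk2
        have h4 := hHuni _ _ hker hk2
        obtain ⟨z, ⟨hz1, hz2⟩, hz0⟩ := (Submodule.ne_bot_iff _).mp h4
        apply hz0
        have hz1' : F z = 0 := hz1
        have hz2' : z - F z = 0 := hz2
        rw [hz1'] at hz2'
        rwa [sub_zero] at hz2'
      have h2 := hinv_aut (LinearEquiv.ofBijective F2 ⟨hinj2, hsurj F2 hinj2⟩) u hu
      have h3 : ((LinearEquiv.ofBijective F2 ⟨hinj2, hsurj F2 hinj2⟩) u : ↥H) = u - F u := rfl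
      rw [h3] at h2
      have h5 : F u = u - (u - F u) := by abel
      rw [h5]
      exact UH.sub_mem hu h2
  -- transfer down to a submodule of N
  set U : Submodule R N := Submodule.comap i UQ with hU
  have hVU : V ≤ U := by
    intro v hv
    show i v ∈ UQ
    exact ⟨hessH.1 (Submodule.mem_map_of_mem hv), LinearMap.mem_range_self _ _⟩
  have hUne : U ≠ ⊥ := ne_bot_of_le' hVU hV
  set ι : ↥U →ₗ[R] ↥H :=
    LinearMap.codRestrict H (i.comp U.subtype) (fun u => (u.2 : i (u : N) ∈ UQ).1) with hι
  have hιcoe : ∀ u : ↥U, ((ι u : ↥H) : ↥HY) = i (u : N) := fun u => rfl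
  have hιinj : Function.Injective ι := by
    intro u u' h
    apply Subtype.ext
    apply hiinj
    have h2 : ((ι u : ↥H) : ↥HY) = ((ι u' : ↥H) : ↥HY) := by rw [h]
    rwa [hιcoe, hιcoe] at h2
  have hιUH : ∀ u : ↥U, ι u ∈ UH := by
    intro u
    show ((ι u : ↥H) : ↥HY) ∈ UQ
    rw [hιcoe]
    exact u.2
  have hrangeι : LinearMap.range ι = UH := by
    apply le_antisymm
    · rintro h ⟨u, rfl⟩
      exact hιUH u
    · intro h hh
      obtain ⟨m, hm⟩ := (hh : (h : ↥HY) ∈ UQ).2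
      have hmU : m ∈ U := by
        show i m ∈ UQ
        rw [hm]
        exact hh
      refine ⟨⟨m, hmU⟩, Subtype.ext ?_⟩
      show ((ι ⟨m, hmU⟩ : ↥H) : ↥HY) = ((h : ↥H) : ↥HY)
      rw [hιcoe]
      exact hm
  set eι := LinearEquiv.ofInjective ι hιinj with heι
  refine ⟨U, hUne, ?_, ?_⟩
  · -- quasi-injectivity of U
    intro N' f'
    set θ : ↥N' →ₗ[R] ↥H := ι.comp N'.subtype with hθ
    have hθinj : Function.Injective θ := hιinj.comp (Submodule.injective_subtype N')
    obtain ⟨F, hFext⟩ := hQH.out θ hθinj (ι.comp f')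
    have hmemr : ∀ u : ↥U, (F.comp ι) u ∈ LinearMap.range ι := by
      intro u
      rw [hrangeι]
      exact hinv F (ι u) (hιUH u)
    set Fι : ↥U →ₗ[R] ↥(LinearMap.range ι) :=
      LinearMap.codRestrict _ (F.comp ι) hmemr with hFι
    refine ⟨(eι.symm : ↥(LinearMap.range ι) →ₗ[R] ↥U).comp Fι, fun n => ?_⟩
    show eι.symm (Fι ((n : ↥U))) = f' n
    have h1 : Fι ((n : ↥U)) = eι (f' n) := by
      apply Subtype.ext
      show F (ι ((n : ↥U))) = ((eι (f' n) : ↥H))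
      rw [LinearEquiv.ofInjective_apply]
      exact hFext n
    rw [h1, LinearEquiv.symm_apply_apply]
  · -- uniformity of U
    exact uniformModule_of_injective ι hιinj hHuni

end PartA
/-- **Lemma 2.4(2).** Let `A` be a semiprime ring not containing an infinite direct sum of
nonzero two-sided ideals, `M` an automorphism-invariant non-singular right `A`-module, and
`M = X ⊕ Y` a decomposition with `X` quasi-injective non-singular and `Y`
automorphism-invariant non-singular square-free. Then either `Y = 0` or `Y` contains a
nonzero quasi-injective uniform submodule. -/
theorem squareFree_part_zero_or_contains_quasiInjective_uniform
    (A : Type u) [Ring A] (hsp : SemiprimeRing A) (hni : NoInfiniteIdealDirectSum A)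
    (M : Type u) [AddCommGroup M] [Module Aᵐᵒᵖ M]
    (hai : AutomorphismInvariant A M) (hns : IsNonsingular A M)
    (X Y : Submodule Aᵐᵒᵖ M) (hcompl : IsCompl X Y)
    (hXqi : QuasiInjective A X) (hXns : IsNonsingular A X)
    (hYai : AutomorphismInvariant A Y) (hYns : IsNonsingular A Y)
    (hYsf : SquareFreeModule A Y) :
    Y = ⊥ ∨ ∃ U : Submodule Aᵐᵒᵖ Y, U ≠ ⊥ ∧ QuasiInjective A U ∧ UniformModule A U := by
  by_cases hYbot : Y = ⊥
  · exact Or.inl hYbot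
  right
  have hTop : (⊤ : Submodule Aᵐᵒᵖ ↥Y) ≠ ⊥ := by
    obtain ⟨y, hy, hy0⟩ := (Submodule.ne_bot_iff _).mp hYbot
    intro h
    have h2 : (⟨y, hy⟩ : ↥Y) ∈ (⊥ : Submodule Aᵐᵒᵖ ↥Y) := h ▸ Submodule.mem_top
    rw [Submodule.mem_bot] at h2
    exact hy0 (congrArg Subtype.val h2)
  obtain ⟨V, hVne, hVu⟩ := exists_rel_uniform A hsp hni ↥Y hYns hYsf hTop
  obtain ⟨U, hUne, hUqi, hUuni⟩ :=
    exists_qi_uniform Aᵐᵒᵖ ↥Y (fun Q _ _ hQ i hi he g m => hYai Q hQ i hi he g m) V hVne hVu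
  exact ⟨U, hUne, hUqi, hUuni⟩

end TugPaper
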